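/- Let 𝒱 = {v_λ : λ ∈ (0,∞)} be a family of continuous functions v_λ : ℝ^d → (0,∞) with 1 ≤ v_λ ≤ v_μ for μ ≤ λ. If 𝒱 satisfies condition (DN): ∃λ>0 ∀μ≤λ ∀θ∈(0,1) ∃ν≤μ ∃C>0 ∀x: v_μ(x) ≤ C v_λ(x)^θ v_ν(x)^{1−θ}, then for ω a weight function the following (wQ)-type condition holds: ∀N∈ℕ ∃M≥N, n∈ℕ ∀K≥M, m∈ℕ ∃k∈ℕ, C>0 ∀(x,ξ)∈ℝ^{2d}: v_{1/m}(x) e^{−M ω(ξ)} ≤ C ( v_{1/n}(x) e^{−N ω(ξ)} + v_{1/k}(x) e^{−K ω(ξ)} ). -/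
import Mathlib


open Real Set

theorem stmt10 (d : ℕ) (v : ℝ → EuclideanSpace ℝ (Fin d) → ℝ)
    (hvc : ∀ lam > (0:ℝ), Continuous (v lam))
    (hv1 : ∀ lam > (0:ℝ), ∀ x, 1 ≤ v lam x)
    (hvmono : ∀ mu lam : ℝ, 0 < mu → mu ≤ lam → ∀ x, v lam x ≤ v mu x)
    (ω : ℝ → ℝ)
    (hmono : MonotoneOn ω (Set.Ici 0))
    (hcont : ContinuousOn ω (Set.Ici 0))
    (hnonneg : ∀ t ≥ (0:ℝ), 0 ≤ ω t)
    (hω0 : ω 0 = 0)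
    (hα : ∃ C > (0:ℝ), ∀ t ≥ (0:ℝ), ω (2 * t) ≤ C * (ω t + 1))
    (hγ : Asymptotics.IsLittleO Filter.atTop Real.log ω)
    (hδ : ConvexOn ℝ (Set.Ici 0) (fun x => ω (Real.exp x)))
    (hDN : ∃ lam > (0:ℝ), ∀ mu : ℝ, 0 < mu → mu ≤ lam → ∀ θ ∈ Set.Ioo (0:ℝ) 1,
      ∃ ν : ℝ, 0 < ν ∧ ν ≤ mu ∧ ∃ C > (0:ℝ), ∀ x,
        v mu x ≤ C * (v lam x) ^ θ * (v ν x) ^ (1 - θ)) :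
    ∀ N : ℕ, ∃ M ≥ N, ∃ n : ℕ, 1 ≤ n ∧ ∀ K ≥ M, ∀ m : ℕ, 1 ≤ m →
      ∃ k : ℕ, 1 ≤ k ∧ ∃ C > (0:ℝ), ∀ x ξ : EuclideanSpace ℝ (Fin d),
        v (1 / m) x * Real.exp (-(M : ℝ) * ω ‖ξ‖) ≤
          C * (v (1 / n) x * Real.exp (-(N : ℝ) * ω ‖ξ‖) +
               v (1 / k) x * Real.exp (-(K : ℝ) * ω ‖ξ‖)) := by
  obtain ⟨lam, hlam, hDN'⟩ := hDN
  intro N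
  set n : ℕ := max 1 ⌈1/lam⌉₊ with hn
  have hn1 : 1 ≤ n := le_max_left _ _
  have hn0 : (0:ℝ) < n := by exact_mod_cast Nat.lt_of_lt_of_le Nat.zero_lt_one hn1
  have hnlam : (1:ℝ)/n ≤ lam := by
    have h1 : (1:ℝ)/lam ≤ n := le_trans (Nat.le_ceil _) (Nat.cast_le.mpr (le_max_right _ _))
    rw [div_le_iff₀ hlam] at h1
    rw [div_le_iff₀ hn0]
    nlinarith
  refine ⟨N + 1, Nat.le_succ N, n, hn1, ?_⟩
  intro K hK m hm
  have hm0 : (0:ℝ) < m := by exact_mod_cast Nat.lt_of_lt_of_le Nat.zero_lt_one hm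
  by_cases hKM : K = N + 1
  · refine ⟨m, hm, 1, one_pos, fun x ξ => ?_⟩
    subst hKM
    have h1 : (0:ℝ) < v (1/n) x := lt_of_lt_of_le one_pos (hv1 _ (by positivity) x)
    have h2 : (0:ℝ) < Real.exp (-(N:ℝ) * ω ‖ξ‖) := Real.exp_pos _
    nlinarith
  · have hKgt : N + 1 < K := lt_of_le_of_ne hK (Ne.symm hKM)
    have hKgtR : ((N:ℝ) + 1) < K := by exact_mod_cast hKgt
    have hKN : (0:ℝ) < (K:ℝ) - N := by linarith
    set θ : ℝ := ((K:ℝ) - (N+1)) / ((K:ℝ) - N) with hθdef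
    have hθ0 : 0 < θ := div_pos (by linarith) hKN
    have hθ1 : θ < 1 := (div_lt_one hKN).mpr (by linarith)
    set μ : ℝ := min ((1:ℝ)/m) lam with hμdef
    have hμ0 : 0 < μ := lt_min (by positivity) hlam
    obtain ⟨ν, hν0, hνμ, C, hC, hbound⟩ := hDN' μ hμ0 (min_le_right _ _) θ ⟨hθ0, hθ1⟩
    set k : ℕ := max 1 ⌈1/ν⌉₊ with hk
    have hk1 : 1 ≤ k := le_max_left _ _
    have hk0 : (0:ℝ) < k := by exact_mod_cast Nat.lt_of_lt_of_le Nat.zero_lt_one hk1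
    have hkν : (1:ℝ)/k ≤ ν := by
      have h1 : (1:ℝ)/ν ≤ k := le_trans (Nat.le_ceil _) (Nat.cast_le.mpr (le_max_right _ _))
      rw [div_le_iff₀ hν0] at h1
      rw [div_le_iff₀ hk0]
      nlinarith
    refine ⟨k, hk1, C, hC, fun x ξ => ?_⟩
    set t : ℝ := ω ‖ξ‖ with htdef
    have ht : 0 ≤ t := hnonneg _ (norm_nonneg _)
    set A : ℝ := v lam x with hA
    set B : ℝ := v ν x with hB
    have hA1 : 1 ≤ A := hv1 _ hlam x
    have hB1 : 1 ≤ B := hv1 _ hν0 x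
    have heN : (0:ℝ) < Real.exp (-(N:ℝ) * t) := Real.exp_pos _
    have heK : (0:ℝ) < Real.exp (-(K:ℝ) * t) := Real.exp_pos _
    -- step 1 : v (1/m) x ≤ v μ x
    have s1 : v (1/m) x ≤ v μ x := hvmono μ (1/m) hμ0 (min_le_left _ _) x
    -- step 2 : DN bound
    have s2 : v μ x ≤ C * A ^ θ * B ^ (1 - θ) := hbound x
    -- exponential identity
    have hsum : (N:ℝ) * θ + (K:ℝ) * (1 - θ) = (N:ℝ) + 1 := by
      rw [hθdef]
      field_simp
      ring
    clear hθdef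
    clear_value θ
    have s3 : Real.exp (-((N:ℝ)+1) * t) =
        (Real.exp (-(N:ℝ) * t)) ^ θ * (Real.exp (-(K:ℝ) * t)) ^ (1 - θ) := by
      rw [← Real.exp_mul, ← Real.exp_mul, ← Real.exp_add]
      congr 1
      linear_combination t * hsum
    -- combine into geometric mean of the two products
    have s4 : v (1/m) x * Real.exp (-((N:ℝ)+1) * t) ≤
        C * ((A * Real.exp (-(N:ℝ) * t)) ^ θ * (B * Real.exp (-(K:ℝ) * t)) ^ (1 - θ)) := by
      rw [Real.mul_rpow (by linarith) heN.le, Real.mul_rpow (by linarith) heK.le, s3]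
      have hexp : (0:ℝ) < (Real.exp (-(N:ℝ) * t)) ^ θ * (Real.exp (-(K:ℝ) * t)) ^ (1 - θ) := by
        positivity
      calc v (1/m) x * ((Real.exp (-(N:ℝ) * t)) ^ θ * (Real.exp (-(K:ℝ) * t)) ^ (1 - θ))
          ≤ (C * A ^ θ * B ^ (1 - θ)) *
            ((Real.exp (-(N:ℝ) * t)) ^ θ * (Real.exp (-(K:ℝ) * t)) ^ (1 - θ)) := by
            exact mul_le_mul_of_nonneg_right (le_trans s1 s2) hexp.le
        _ = C * (A ^ θ * Real.exp (-(N:ℝ) * t) ^ θ * (B ^ (1 - θ) * Real.exp (-(K:ℝ) * t) ^ (1 - θ))) := by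
            ring
    -- weighted AM-GM
    have s5 : (A * Real.exp (-(N:ℝ) * t)) ^ θ * (B * Real.exp (-(K:ℝ) * t)) ^ (1 - θ) ≤
        A * Real.exp (-(N:ℝ) * t) + B * Real.exp (-(K:ℝ) * t) := by
      have := Real.geom_mean_le_arith_mean2_weighted hθ0.le (by linarith : (0:ℝ) ≤ 1 - θ)
        (by positivity : (0:ℝ) ≤ A * Real.exp (-(N:ℝ) * t))
        (by positivity : (0:ℝ) ≤ B * Real.exp (-(K:ℝ) * t)) (by ring)
      nlinarith [mul_pos (lt_of_lt_of_le one_pos hA1) heN, mul_pos (lt_of_lt_of_le one_pos hB1) heK]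
    -- monotone replacement by 1/n and 1/k weights
    have s6 : A ≤ v (1/n) x := hvmono (1/n) lam (by positivity) hnlam x
    have s7 : B ≤ v (1/k) x := hvmono (1/k) ν (by positivity) hkν x
    have final : v (1/m) x * Real.exp (-((N:ℝ)+1) * t) ≤
        C * (v (1/n) x * Real.exp (-(N:ℝ) * t) + v (1/k) x * Real.exp (-(K:ℝ) * t)) := by
      refine le_trans s4 ?_
      have step : (A * Real.exp (-(N:ℝ) * t)) ^ θ * (B * Real.exp (-(K:ℝ) * t)) ^ (1 - θ) ≤
          v (1/n) x * Real.exp (-(N:ℝ) * t) + v (1/k) x * Real.exp (-(K:ℝ) * t) := by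
        refine le_trans s5 ?_
        have := mul_le_mul_of_nonneg_right s6 heN.le
        have := mul_le_mul_of_nonneg_right s7 heK.le
        linarith
      exact mul_le_mul_of_nonneg_left step hC.le
    have hcast : ((N + 1 : ℕ) : ℝ) = (N:ℝ) + 1 := by push_cast; ring
    simpa [hcast] using final
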